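/- Let (u_n)_{n≥1} be a sequence of positive reals that is regularly varying at infinity with index -γ for some γ > 1 (so in particular ∑ u_n =: u < ∞, assume u < 1). Then for each fixed k ≥ 1, the k-fold convolution satisfies u_n^{*(k)} / u_n → k u^{k-1} as n → ∞. -/

import Mathlib

/-- Convolution of sequences indexed by the positive integers:
`(a*b)(n) = ∑_{j=1}^{n-1} a(j) b(n-j)`. -/
noncomputable def conv (a b : ℕ → ℝ) (n : ℕ) : ℝ :=
  ∑ j ∈ Finset.Ico 1 n, a j * b (n - j)

/-- `iterConv a k = a^{*(k)}` for `k ≥ 1`: `a^{*(1)} = a` and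
`a^{*(k+1)} = a^{*(k)} * a`. -/
noncomputable def iterConv (a : ℕ → ℝ) : ℕ → ℕ → ℝ
  | 0, n => if n = 0 then 1 else 0
  | k + 1, n => if k = 0 then a n else conv (iterConv a k) a n

/-- A positive sequence `a` is regularly varying at infinity with index `ρ`
if `a ⌊l·n⌋ / a n → l ^ ρ` for every `l > 0`. -/
def RegVar (a : ℕ → ℝ) (ρ : ℝ) : Prop :=
  ∀ l : ℝ, 0 < l →
    Filter.Tendsto (fun n : ℕ => a ⌊l * (n : ℝ)⌋₊ / a n) Filter.atTop
      (nhds (l ^ ρ))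

open Filter MeasureTheory Set ENNReal

set_option maxHeartbeats 1000000 in
lemma lemA (u : ℕ → ℝ) (hupos : ∀ n, 1 ≤ n → 0 < u n) (γ : ℝ) (hγ : 0 < γ)
    (hrv : RegVar u (-γ)) {ε : ℝ} (hε : 0 < ε) :
    ∃ N : ℕ, 1 ≤ N ∧ ∀ m n : ℕ, N ≤ m → N ≤ n → n ≤ 2 * m → m ≤ n →
      |u m / u n - ((m : ℝ) / n) ^ (-γ)| ≤ ε := by
  set q : ℝ := (4 : ℝ) ^ (-γ) with hq_def
  have hq : 0 < q := Real.rpow_pos_of_pos (by norm_num) _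
  set ε' : ℝ := min (q / 2) (ε * q ^ 2 / 4) with hε'_def
  have hε' : 0 < ε' := lt_min (by positivity) (by positivity)
  set F : ℝ → ℝ := fun l => (max l 1) ^ (-γ) with hF_def
  have hFcont : Continuous F :=
    (continuous_id.max continuous_const).rpow_const
      (fun x => Or.inl (by positivity))
  have hFeq : ∀ l : ℝ, 1 ≤ l → F l = l ^ (-γ) := by
    intro l hl; simp [hF_def, max_eq_left hl]
  set S : ℕ → Set ℝ :=
    fun N => {l | ∀ n : ℕ, N ≤ n → |u ⌊l * (n : ℝ)⌋₊ / u n - F l| ≤ ε'} with hS_def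
  have hSmeas : ∀ N, MeasurableSet (S N) := by
    intro N
    have : S N = ⋂ (n : ℕ) (_ : N ≤ n),
        {l : ℝ | |u ⌊l * (n : ℝ)⌋₊ / u n - F l| ≤ ε'} := by
      ext l; simp [hS_def, Set.mem_iInter]
    rw [this]
    refine MeasurableSet.iInter fun n => MeasurableSet.iInter fun _ => ?_
    have h1 : Measurable fun l : ℝ => u ⌊l * (n : ℝ)⌋₊ :=
      measurable_from_top.comp (Nat.measurable_floor.comp (measurable_id.mul_const _))
    have h2 : Measurable fun l : ℝ => |u ⌊l * (n : ℝ)⌋₊ / u n - F l| :=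
      ((h1.div_const _).sub hFcont.measurable).abs
    exact measurableSet_le h2 measurable_const
  have hSmono : Monotone S := by
    intro N M h l hl n hn
    exact hl n (le_trans h hn)
  have hSU : Icc (1 : ℝ) 4 ⊆ ⋃ N, S N := by
    intro l hl
    have hl0 : (0 : ℝ) < l := lt_of_lt_of_le one_pos hl.1
    have := hrv l hl0
    rw [Metric.tendsto_atTop] at this
    obtain ⟨N, hN⟩ := this ε' hε'
    refine Set.mem_iUnion.2 ⟨N, fun n hn => ?_⟩
    have h2 := hN n hn; rw [Real.dist_eq] at h2
    rw [hFeq l hl.1]; exact h2.le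
  set E : ℕ → Set ℝ := fun N => Icc (1 : ℝ) 4 \ S N with hE_def
  have hEmeas : ∀ N, MeasurableSet (E N) := fun N => measurableSet_Icc.diff (hSmeas N)
  have hEanti : Antitone E := fun N M h => Set.diff_subset_diff_right (hSmono h)
  have hEempty : ⋂ N, E N = ∅ := by
    rw [Set.eq_empty_iff_forall_notMem]
    intro l hl
    have h1 : l ∈ Icc (1:ℝ) 4 := (Set.mem_iInter.1 hl 0).1
    obtain ⟨N, hN⟩ := Set.mem_iUnion.1 (hSU h1)
    exact (Set.mem_iInter.1 hl N).2 hN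
  have hEfin : volume (E 0) ≠ ⊤ :=
    ne_top_of_le_ne_top (by simp [Real.volume_Icc]) (measure_mono Set.diff_subset)
  have hEtendsto : Tendsto (volume ∘ E) atTop (nhds 0) := by
    have := tendsto_measure_iInter_atTop (μ := volume)
      (fun N => (hEmeas N).nullMeasurableSet) hEanti ⟨0, hEfin⟩
    rwa [hEempty, measure_empty] at this
  obtain ⟨N₀, hN₀⟩ := Filter.eventually_atTop.1 (hEtendsto.eventually
    (gt_mem_nhds (by norm_num : (0 : ℝ≥0∞) < 1/2)))
  refine ⟨max N₀ 1, le_max_right _ _, ?_⟩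
  intro m n hm hn hnm hmn
  have hEN : volume (E N₀) < 1/2 := hN₀ N₀ le_rfl
  have hm1 : 1 ≤ m := le_trans (le_max_right _ _) hm
  have hn1 : 1 ≤ n := le_trans (le_max_right _ _) hn
  have hmN : N₀ ≤ m := le_trans (le_max_left _ _) hm
  have hnN : N₀ ≤ n := le_trans (le_max_left _ _) hn
  have hmpos : (0 : ℝ) < m := by exact_mod_cast hm1
  have hnpos : (0 : ℝ) < n := by exact_mod_cast hn1
  set c : ℝ := (m : ℝ) / n with hc_def
  have hc0 : 0 < c := by positivity
  have hc1 : 1/2 ≤ c := by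
    rw [le_div_iff₀ hnpos]
    have : (n : ℝ) ≤ 2 * m := by exact_mod_cast hnm
    linarith
  have hc2 : c ≤ 1 := by
    rw [div_le_one hnpos]; exact_mod_cast hmn
  -- find good l
  have key : (Icc (2:ℝ) 4 ∩ S N₀ ∩ {l | c * l ∈ S N₀}).Nonempty := by
    by_contra h
    rw [Set.not_nonempty_iff_eq_empty] at h
    have hsub : Icc (2:ℝ) 4 ⊆ (Icc (2:ℝ) 4 \ S N₀) ∪ ((c * ·) ⁻¹' E N₀) := by
      intro l hl
      by_cases h1 : l ∈ S N₀
      · by_cases h2 : c * l ∈ S N₀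
        · exact absurd (Set.eq_empty_iff_forall_notMem.1 h l ⟨⟨hl, h1⟩, h2⟩) (fun h => h)
        · refine Or.inr ⟨⟨?_, ?_⟩, h2⟩
          · show (1:ℝ) ≤ c * l
            nlinarith [hl.1, hl.2, hc1, hc2]
          · show c * l ≤ (4:ℝ)
            nlinarith [hl.1, hl.2, hc1, hc2]
      · exact Or.inl ⟨hl, h1⟩
    have hv1 : volume (Icc (2:ℝ) 4 \ S N₀) < 1/2 :=
      lt_of_le_of_lt (measure_mono (Set.diff_subset_diff_left (Icc_subset_Icc (by norm_num) le_rfl))) hEN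
    have hv2 : volume ((c * ·) ⁻¹' E N₀) < 1 := by
      rw [Real.volume_preimage_mul_left (ne_of_gt hc0)]
      have h1 : |c⁻¹| ≤ 2 := by
        rw [abs_of_pos (by positivity)]
        rw [inv_le_comm₀ (by positivity) (by norm_num)]
        linarith
      calc ENNReal.ofReal |c⁻¹| * volume (E N₀)
          ≤ 2 * volume (E N₀) := by
            gcongr
            exact le_trans (ENNReal.ofReal_le_ofReal h1) (by norm_num)
        _ < 2 * (1/2) := by
            refine ENNReal.mul_lt_mul_right (by norm_num : (2:ℝ≥0∞) ≠ 0) (by norm_num : (2:ℝ≥0∞) ≠ ⊤) hEN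
        _ = 1 := by rw [one_div, ENNReal.mul_inv_cancel] <;> norm_num
    have h24 : volume (Icc (2:ℝ) 4) = 2 := by
      rw [Real.volume_Icc]; norm_num
    have : (2 : ℝ≥0∞) ≤ volume (Icc (2:ℝ) 4 \ S N₀) + volume ((c * ·) ⁻¹' E N₀) := by
      rw [← h24]
      exact le_trans (measure_mono hsub) (measure_union_le _ _)
    have hlt : volume (Icc (2:ℝ) 4 \ S N₀) + volume ((c * ·) ⁻¹' E N₀) < 1/2 + 1 :=
      ENNReal.add_lt_add hv1 hv2
    have h2' : (2 : ℝ≥0∞) < 1/2 + 1 := lt_of_le_of_lt this hlt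
    have h3' : ¬ ((2:ℝ≥0∞) < 1/2 + 1) := by
      rw [not_lt]
      calc (1/2 : ℝ≥0∞) + 1 ≤ 1 + 1 := by gcongr; exact ENNReal.half_le_self
        _ = 2 := one_add_one_eq_two
    exact h3' h2'
  obtain ⟨l, ⟨⟨hl24, hlS⟩, hwS⟩⟩ := key
  have hl2 : (2:ℝ) ≤ l := hl24.1
  have hl4 : l ≤ 4 := hl24.2
  have hl0 : (0:ℝ) < l := by linarith
  set w : ℝ := c * l with hw_def
  have hw1 : (1:ℝ) ≤ w := by nlinarith
  have hw4 : w ≤ 4 := by nlinarith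
  set k : ℕ := ⌊l * (m:ℝ)⌋₊ with hk_def
  have hk1 : 1 ≤ k := by
    refine Nat.le_floor ?_
    push_cast
    nlinarith [hl2, hmpos, (by exact_mod_cast hm1 : (1:ℝ) ≤ (m:ℝ))]
  have hfl : ⌊w * (n:ℝ)⌋₊ = k := by
    rw [hk_def]
    congr 1
    rw [hw_def, hc_def]
    field_simp
  have h1 := hlS m hmN
  have h2 := hwS n hnN
  rw [hfl] at h2
  rw [hFeq l (by linarith)] at h1
  rw [hFeq w hw1] at h2
  -- positivity of u values
  have hum : 0 < u m := hupos m hm1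
  have hun : 0 < u n := hupos n hn1
  have huk : 0 < u k := hupos k hk1
  -- bounds on p, P
  set p : ℝ := l ^ (-γ) with hp_def
  set P : ℝ := w ^ (-γ) with hP_def
  have hrpow_le : ∀ a b : ℝ, 0 < a → a ≤ b → b ^ (-γ) ≤ a ^ (-γ) := by
    intro a b ha hab
    rw [Real.rpow_neg (le_of_lt ha), Real.rpow_neg (by linarith)]
    have h1 : a ^ γ ≤ b ^ γ := Real.rpow_le_rpow (le_of_lt ha) hab (le_of_lt hγ)
    have h2 : 0 < a ^ γ := Real.rpow_pos_of_pos ha _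
    exact inv_anti₀ h2 h1
  have hrpow_le_one : ∀ a : ℝ, 1 ≤ a → a ^ (-γ) ≤ 1 := by
    intro a ha
    have := hrpow_le 1 a one_pos ha
    rwa [Real.one_rpow] at this
  have hqp : q ≤ p := hrpow_le l 4 hl0 hl4
  have hp1 : p ≤ 1 := hrpow_le_one l (by linarith)
  have hqP : q ≤ P := hrpow_le w 4 (by linarith) hw4
  have hP1 : P ≤ 1 := hrpow_le_one w hw1
  have hε'q : ε' ≤ q / 2 := min_le_left _ _
  have hε'ε : ε' ≤ ε * q ^ 2 / 4 := min_le_right _ _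
  -- set x, y
  set x : ℝ := u k / u m with hx_def
  set y : ℝ := u k / u n with hy_def
  have hxy : u m / u n = y / x := by
    rw [hx_def, hy_def]
    field_simp
  have hmnwl : ((m:ℝ)/n) ^ (-γ) = P / p := by
    have hwl : (m:ℝ)/n = w / l := by
      rw [hw_def, hc_def]; field_simp
    rw [hwl, hP_def, hp_def, ← Real.div_rpow (by linarith) (by linarith)]
  rw [hxy, hmnwl]
  have hax : |x - p| ≤ ε' := h1
  have hay : |y - P| ≤ ε' := h2
  rw [abs_le] at hax hay
  have hxq : q / 2 ≤ x := by linarith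
  have hx0 : 0 < x := by linarith [hq]
  have hp0 : 0 < p := by linarith
  have hnum : |y * p - P * x| ≤ 2 * ε' := by
    have : y * p - P * x = (y - P) * p + P * (p - x) := by ring
    rw [this]
    calc |(y - P) * p + P * (p - x)| ≤ |(y - P) * p| + |P * (p - x)| := abs_add_le _ _
      _ = |y - P| * |p| + |P| * |p - x| := by rw [abs_mul, abs_mul]
      _ ≤ ε' * 1 + 1 * ε' := by
          have h1' : |y - P| ≤ ε' := abs_le.2 ⟨hay.1, hay.2⟩
          have h2' : |p| ≤ 1 := by rw [abs_of_pos hp0]; exact hp1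
          have h3' : |P| ≤ 1 := by rw [abs_of_pos (by linarith : (0:ℝ) < P)]; exact hP1
          have h4' : |p - x| ≤ ε' := by rw [abs_sub_comm]; exact abs_le.2 ⟨hax.1, hax.2⟩
          have := abs_nonneg (y - P)
          have := abs_nonneg (p - x)
          nlinarith
      _ = 2 * ε' := by ring
  have hyx : y / x - P / p = (y * p - P * x) / (x * p) := by
    field_simp
  rw [hyx, abs_div, abs_of_pos (by positivity : (0:ℝ) < x * p)]
  rw [div_le_iff₀ (by positivity)]
  have hxp : q ^ 2 / 2 ≤ x * p := by nlinarith
  calc |y * p - P * x| ≤ 2 * ε' := hnum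
    _ ≤ ε * (q ^ 2 / 2) := by
        have h5 : ε * q ^ 2 / 4 * 2 = ε * (q^2/2) := by ring
        linarith [hε'ε]
    _ ≤ ε * (x * p) := mul_le_mul_of_nonneg_left hxp (le_of_lt hε)

section Helpers
variable (u : ℕ → ℝ) (γ : ℝ)

/-- C1 : uniform comparison bound for `m ∈ [n/2, n]`. -/
lemma lemC1 (hupos : ∀ n, 1 ≤ n → 0 < u n) (hγ : 0 < γ) (hrv : RegVar u (-γ)) :
    ∃ C : ℝ, 0 < C ∧ ∃ N : ℕ, 1 ≤ N ∧ ∀ m n : ℕ, N ≤ m → N ≤ n → n ≤ 2 * m → m ≤ n →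
      u m ≤ C * u n := by
  obtain ⟨N, hN1, hN⟩ := lemA u hupos γ hγ hrv (one_pos)
  refine ⟨(2:ℝ) ^ γ + 1, by positivity, N, hN1, ?_⟩
  intro m n hm hn hnm hmn
  have hun : 0 < u n := hupos n (le_trans hN1 hn)
  have hum : 0 < u m := hupos m (le_trans hN1 hm)
  have h := hN m n hm hn hnm hmn
  rw [abs_le] at h
  have hm1' : (1:ℝ) ≤ m := by exact_mod_cast le_trans hN1 hm
  have hn1' : (1:ℝ) ≤ n := by exact_mod_cast le_trans hN1 hn
  have hmpos : (0:ℝ) < m := by linarith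
  have hnpos : (0:ℝ) < n := by linarith
  have hhalf : (1:ℝ)/2 ≤ (m:ℝ)/n := by
    rw [div_le_div_iff₀ (by norm_num) hnpos]
    have : (n:ℝ) ≤ 2 * m := by exact_mod_cast hnm
    linarith
  have hrbound : ((m:ℝ)/n) ^ (-γ) ≤ (2:ℝ) ^ γ := by
    have h1 : ((1:ℝ)/2) ^ (-γ) = (2:ℝ) ^ γ := by
      rw [one_div, Real.inv_rpow (by norm_num : (0:ℝ) ≤ 2),
        Real.rpow_neg (by norm_num : (0:ℝ) ≤ 2), inv_inv]
    rw [← h1]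
    -- antitone in base
    rw [Real.rpow_neg (by positivity), Real.rpow_neg (by norm_num)]
    refine inv_anti₀ (Real.rpow_pos_of_pos (by norm_num) _) ?_
    exact Real.rpow_le_rpow (by norm_num) hhalf (le_of_lt hγ)
  have : u m / u n ≤ (2:ℝ)^γ + 1 := by linarith [h.2, hrbound]
  calc u m = (u m / u n) * u n := by field_simp
    _ ≤ ((2:ℝ)^γ + 1) * u n := by
        exact mul_le_mul_of_nonneg_right this (le_of_lt hun)
end Helpers

section Helpers2
variable {u : ℕ → ℝ} {γ : ℝ}

/-- C2 : ratio convergence `u (n-j) / u n → 1`. -/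
lemma lemC2 (hupos : ∀ n, 1 ≤ n → 0 < u n) (hγ : 0 < γ) (hrv : RegVar u (-γ)) (j : ℕ) :
    Tendsto (fun n : ℕ => u (n - j) / u n) atTop (nhds 1) := by
  have hr : Tendsto (fun n : ℕ => ((n - j : ℕ) : ℝ) / n) atTop (nhds 1) := by
    have h1 : Tendsto (fun n : ℕ => 1 - (j:ℝ)/n) atTop (nhds 1) := by
      have := (tendsto_const_div_atTop_nhds_zero_nat (j:ℝ))
      have h2 := tendsto_const_nhds (x := (1:ℝ)) (f := atTop (α := ℕ)) |>.sub this
      simpa using h2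
    refine h1.congr' ?_
    filter_upwards [eventually_ge_atTop (j+1)] with n hn
    have hn0 : (0:ℝ) < n := by exact_mod_cast (by omega : 0 < n)
    rw [Nat.cast_sub (by omega)]
    field_simp
  have hrp : Tendsto (fun n : ℕ => (((n - j : ℕ):ℝ)/n) ^ (-γ)) atTop (nhds 1) := by
    have hcont := (Real.continuousAt_rpow_const 1 (-γ) (Or.inl one_ne_zero))
    have := hcont.tendsto.comp hr
    simpa [Function.comp_def] using this
  -- difference tends to 0
  have hdiff : Tendsto (fun n : ℕ => u (n - j) / u n - (((n - j : ℕ):ℝ)/n) ^ (-γ))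
      atTop (nhds 0) := by
    rw [NormedAddCommGroup.tendsto_nhds_zero]
    intro ε hε
    obtain ⟨N, hNone, hN⟩ := lemA u hupos γ hγ hrv (half_pos hε)
    filter_upwards [eventually_ge_atTop (2*j + 2*N)] with n hn
    have h := hN (n - j) n (by omega) (by omega) (by omega) (by omega)
    have : ‖u (n - j) / u n - (((n - j:ℕ):ℝ)/n) ^ (-γ)‖ ≤ ε/2 := by
      rw [Real.norm_eq_abs]; exact h
    linarith
  have := hdiff.add hrp
  rw [zero_add] at this
  refine this.congr ?_
  intro n; ring
end Helpers2

section Main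
variable {u : ℕ → ℝ} {γ : ℝ}

lemma sum_Ico_one (f : ℕ → ℝ) (hf0 : f 0 = 0) (K : ℕ) :
    ∑ j ∈ Finset.Ico 1 K, f j = ∑ j ∈ Finset.range K, f j := by
  rcases Nat.eq_zero_or_pos K with h | h
  · subst h; simp
  · rw [Finset.range_eq_Ico, Finset.sum_eq_sum_Ico_succ_bot h, hf0, zero_add]

lemma exists_bound (hu0 : u 0 = 0) (hupos : ∀ n, 1 ≤ n → 0 < u n)
    (a : ℕ → ℝ) (ha0 : a 0 = 0) (hann : ∀ n, 0 ≤ a n) {c : ℝ}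
    (hc : Tendsto (fun n => a n / u n) atTop (nhds c)) :
    ∃ B : ℝ, 0 < B ∧ ∀ n, a n ≤ B * u n := by
  have hunn : ∀ n, 0 ≤ u n := by
    intro n; rcases Nat.eq_zero_or_pos n with h|h
    · subst h; rw [hu0]
    · exact le_of_lt (hupos n h)
  obtain ⟨N₁, hN₁⟩ := Metric.tendsto_atTop.1 hc 1 one_pos
  set B : ℝ := max (c+1) 0 + (∑ j ∈ Finset.range N₁, a j / u j) + 1 with hB_def
  have hsumnn : 0 ≤ ∑ j ∈ Finset.range N₁, a j / u j :=
    Finset.sum_nonneg fun j _ => div_nonneg (hann j) (hunn j)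
  refine ⟨B, by positivity, ?_⟩
  intro n
  rcases Nat.eq_zero_or_pos n with h|h
  · subst h; rw [ha0, hu0]; simp
  have hun : 0 < u n := hupos n h
  have hfin : a n / u n ≤ B := by
    rcases le_or_gt N₁ n with h2 | h2
    · have hd := hN₁ n h2
      rw [Real.dist_eq, abs_lt] at hd
      have h3 : a n / u n ≤ c + 1 := by linarith [hd.2]
      have hmax : c + 1 ≤ max (c+1) 0 := le_max_left _ _
      rw [hB_def]; linarith
    · have hle : a n / u n ≤ ∑ j ∈ Finset.range N₁, a j / u j :=
        Finset.single_le_sum (f := fun j => a j / u j)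
          (fun j _ => div_nonneg (hann j) (hunn j)) (Finset.mem_range.2 h2)
      have hmax : (0:ℝ) ≤ max (c+1) 0 := le_max_right _ _
      rw [hB_def]; linarith
  calc a n = (a n / u n) * u n := by field_simp
    _ ≤ B * u n := mul_le_mul_of_nonneg_right hfin (le_of_lt hun)

set_option maxHeartbeats 2000000 in
lemma conv_tendsto (hu0 : u 0 = 0) (hupos : ∀ n, 1 ≤ n → 0 < u n)
    (hγ : 0 < γ) (hrv : RegVar u (-γ)) (husum : Summable u)
    (a : ℕ → ℝ) (ha0 : a 0 = 0) (hann : ∀ n, 0 ≤ a n) (hasum : Summable a)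
    {c : ℝ} (hc : Tendsto (fun n => a n / u n) atTop (nhds c)) :
    Tendsto (fun n => conv a u n / u n) atTop
      (nhds ((∑' n, a n) + c * (∑' n, u n))) := by
  have hunn : ∀ n, 0 ≤ u n := by
    intro n; rcases Nat.eq_zero_or_pos n with h|h
    · subst h; rw [hu0]
    · exact le_of_lt (hupos n h)
  obtain ⟨B, hB, hBle⟩ := exists_bound hu0 hupos a ha0 hann hc
  obtain ⟨C, hC, N₁, hN₁1, hC1⟩ := lemC1 u γ hupos hγ hrv
  set A : ℝ := ∑' n, a n with hA_def
  set U : ℝ := ∑' n, u n with hU_def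
  set L : ℝ := A + c * U with hL_def
  -- tails
  set tailA : ℕ → ℝ := fun M => A - ∑ j ∈ Finset.range (M+1), a j with htailA_def
  set tailU : ℕ → ℝ := fun M => U - ∑ j ∈ Finset.range (M+1), u j with htailU_def
  have htailA0 : Tendsto tailA atTop (nhds 0) := by
    have h1 := hasum.hasSum.tendsto_sum_nat.comp (tendsto_add_atTop_nat 1)
    have h2 := (tendsto_const_nhds (x := A) (f := atTop (α := ℕ))).sub h1
    simpa [← hA_def] using h2
  have htailU0 : Tendsto tailU atTop (nhds 0) := by
    have h1 := husum.hasSum.tendsto_sum_nat.comp (tendsto_add_atTop_nat 1)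
    have h2 := (tendsto_const_nhds (x := U) (f := atTop (α := ℕ))).sub h1
    simpa [← hU_def] using h2
  have htailAle : ∀ M K, ∑ j ∈ Finset.Ico (M+1) K, a j ≤ tailA M := by
    intro M K
    have hbase : ∀ K', ∑ j ∈ Finset.range K', a j ≤ A :=
      fun K' => Summable.sum_le_tsum _ (fun j _ => hann j) hasum
    rcases le_or_gt K (M+1) with h | h
    · rw [Finset.Ico_eq_empty (by omega)]
      simp only [Finset.sum_empty]
      have := hbase (M+1); simp [htailA_def]; linarith
    · have hco := Finset.sum_Ico_consecutive a (by omega : 0 ≤ M+1) (le_of_lt h)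
      rw [← Finset.range_eq_Ico, ← Finset.range_eq_Ico] at hco
      simp only [htailA_def]
      linarith [hco, hbase K]
  have htailUle : ∀ M K, ∑ j ∈ Finset.Ico (M+1) K, u j ≤ tailU M := by
    intro M K
    have hbase : ∀ K', ∑ j ∈ Finset.range K', u j ≤ U :=
      fun K' => Summable.sum_le_tsum _ (fun j _ => hunn j) husum
    rcases le_or_gt K (M+1) with h | h
    · rw [Finset.Ico_eq_empty (by omega)]
      simp only [Finset.sum_empty]
      have := hbase (M+1); simp [htailU_def]; linarith
    · have hco := Finset.sum_Ico_consecutive u (by omega : 0 ≤ M+1) (le_of_lt h)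
      rw [← Finset.range_eq_Ico, ← Finset.range_eq_Ico] at hco
      simp only [htailU_def]
      linarith [hco, hbase K]
  have htailAnn : ∀ M, 0 ≤ tailA M := fun M => by
    have := htailAle M 0
    simpa using le_trans (by simp) this
  have htailUnn : ∀ M, 0 ≤ tailU M := fun M => by
    have := htailUle M 0
    simpa using le_trans (by simp) this
  rw [Metric.tendsto_atTop]
  intro ε hε
  set η : ℝ := ε/4 with hη_def
  have hη : 0 < η := by positivity
  -- choose M
  have hMlim : Tendsto (fun M => C * (tailA M + B * tailU M)) atTop (nhds 0) := by
    have := (htailA0.add (htailU0.const_mul B)).const_mul C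
    simpa using this
  have hLMlim : Tendsto (fun M : ℕ =>
      (∑ j ∈ Finset.range (M+1), a j) + c * (∑ i ∈ Finset.range (M+1), u i))
      atTop (nhds L) := by
    have h1 := hasum.hasSum.tendsto_sum_nat.comp (tendsto_add_atTop_nat 1)
    have h2 := husum.hasSum.tendsto_sum_nat.comp (tendsto_add_atTop_nat 1)
    exact h1.add (h2.const_mul c)
  obtain ⟨M₀, hM₀⟩ := Metric.tendsto_atTop.1 hMlim η hη
  obtain ⟨M₁, hM₁⟩ := Metric.tendsto_atTop.1 hLMlim η hη
  set M : ℕ := max M₀ M₁ with hM_def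
  have hMtail : C * (tailA M + B * tailU M) < η := by
    have := hM₀ M (le_max_left _ _)
    rw [Real.dist_eq] at this
    have h2 := abs_lt.1 this
    linarith [h2.2]
  set LM : ℝ := (∑ j ∈ Finset.Ico 1 (M+1), a j) + ∑ i ∈ Finset.Ico 1 (M+1), c * u i
    with hLM_def
  have hLMeq : LM = (∑ j ∈ Finset.range (M+1), a j) + c * (∑ i ∈ Finset.range (M+1), u i) := by
    rw [hLM_def, sum_Ico_one a ha0, ← Finset.mul_sum, sum_Ico_one u hu0]
  have hLMclose : |LM - L| < η := by
    have := hM₁ M (le_max_right _ _)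
    rw [Real.dist_eq] at this
    rw [hLMeq]
    exact this
  clear_value M
  -- the approximating function g
  set g : ℕ → ℝ := fun n => (∑ j ∈ Finset.Ico 1 (M+1), a j * (u (n-j) / u n)) +
      ∑ i ∈ Finset.Ico 1 (M+1), a (n-i) * u i / u n with hg_def
  have hg : Tendsto g atTop (nhds LM) := by
    refine Tendsto.add ?_ ?_
    · refine tendsto_finset_sum _ fun j hj => ?_
      have := (lemC2 hupos hγ hrv j).const_mul (a j)
      simpa using this
    · refine tendsto_finset_sum _ fun i hi => ?_
      have hi1 : 1 ≤ i := (Finset.mem_Ico.1 hi).1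
      have h1 : Tendsto (fun n : ℕ => a (n-i) / u (n-i)) atTop (nhds c) :=
        hc.comp (tendsto_sub_atTop_nat i)
      have h2 := lemC2 hupos hγ hrv i
      have h3 := (h1.mul h2).mul_const (u i)
      rw [mul_one] at h3
      refine h3.congr' ?_
      filter_upwards [eventually_ge_atTop (i+1)] with n hn
      have hni : 1 ≤ n - i := by omega
      have hn1 : 1 ≤ n := by omega
      have h4 : u (n-i) ≠ 0 := ne_of_gt (hupos _ hni)
      field_simp
  obtain ⟨N₂, hN₂⟩ := Metric.tendsto_atTop.1 hg η hη
  refine ⟨max (max (2*M+2) (2*N₁)) N₂, fun n hn => ?_⟩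
  have hn2M : 2*M+2 ≤ n := le_trans (le_trans (le_max_left _ _) (le_max_left _ _)) hn
  have hn2N : 2*N₁ ≤ n := le_trans (le_trans (le_max_right _ _) (le_max_left _ _)) hn
  have hnN₂ : N₂ ≤ n := le_trans (le_max_right _ _) hn
  have hn1 : 1 ≤ n := by omega
  have hun : 0 < u n := hupos n hn1
  -- decomposition
  have hsplit : conv a u n = (∑ j ∈ Finset.Ico 1 (M+1), a j * u (n-j)) +
      (∑ j ∈ Finset.Ico (M+1) (n-M), a j * u (n-j)) +
      (∑ j ∈ Finset.Ico (n-M) n, a j * u (n-j)) := by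
    rw [conv]
    rw [← Finset.sum_Ico_consecutive (fun j => a j * u (n-j)) (by omega : 1 ≤ M+1) (by omega : M+1 ≤ n)]
    rw [← Finset.sum_Ico_consecutive (fun j => a j * u (n-j)) (by omega : M+1 ≤ n-M) (by omega : n-M ≤ n)]
    ring
  have hS3 : ∑ j ∈ Finset.Ico (n-M) n, a j * u (n-j)
      = ∑ i ∈ Finset.Ico 1 (M+1), a (n-i) * u i := by
    refine Finset.sum_nbij' (fun j => n - j) (fun i => n - i) ?_ ?_ ?_ ?_ ?_
    · intro j hj; simp only [Finset.mem_Ico] at *; omega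
    · intro i hi; simp only [Finset.mem_Ico] at *; omega
    · intro j hj; simp only [Finset.mem_Ico] at hj ⊢; omega
    · intro i hi; simp only [Finset.mem_Ico] at hi ⊢; omega
    · intro j hj; simp only [Finset.mem_Ico] at hj
      have h5 : n - (n - j) = j := by omega
      simp only [h5]
  -- middle bound
  set S2 : ℝ := ∑ j ∈ Finset.Ico (M+1) (n-M), a j * u (n-j) with hS2_def
  have hS2nn : 0 ≤ S2 :=
    Finset.sum_nonneg fun j _ => mul_nonneg (hann j) (hunn _)
  have hterm : ∀ j ∈ Finset.Ico (M+1) (n-M),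
      a j * u (n-j) ≤ (C * u n) * (a j + B * u (n-j)) := by
    intro j hj
    rw [Finset.mem_Ico] at hj
    have hj1 : 1 ≤ j := by omega
    have hjn : j < n := by omega
    by_cases hcase : n ≤ 2*(n-j)
    · have hb := hC1 (n-j) n (by omega) (by omega) hcase (by omega)
      have h1 : 0 ≤ a j := hann j
      have h2 : 0 ≤ u (n-j) := hunn _
      nlinarith [mul_nonneg (mul_nonneg hB.le h2) (mul_pos hC hun).le]
    · push_neg at hcase
      have hb := hC1 j n (by omega) (by omega) (by omega) (by omega)
      have h1 : a j ≤ B * u j := hBle j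
      have h2 : 0 ≤ u (n-j) := hunn _
      have h3 : 0 ≤ a j := hann j
      have h4 : 0 ≤ u j := hunn j
      nlinarith [mul_le_mul_of_nonneg_right h1 h2,
        mul_le_mul_of_nonneg_right (mul_le_mul_of_nonneg_left hb hB.le) h2,
        mul_nonneg h3 (mul_pos hC hun).le]
  have hS2le : S2 ≤ C * u n * (tailA M + B * tailU M) := by
    have h1 : S2 ≤ ∑ j ∈ Finset.Ico (M+1) (n-M), (C * u n) * (a j + B * u (n-j)) :=
      Finset.sum_le_sum hterm
    have hrefl : ∑ j ∈ Finset.Ico (M+1) (n-M), u (n-j)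
        = ∑ i ∈ Finset.Ico (M+1) (n-M), u i := by
      refine Finset.sum_nbij' (fun j => n - j) (fun i => n - i) ?_ ?_ ?_ ?_ ?_
      · intro j hj; simp only [Finset.mem_Ico] at *; omega
      · intro i hi; simp only [Finset.mem_Ico] at *; omega
      · intro j hj; simp only [Finset.mem_Ico] at hj ⊢; omega
      · intro i hi; simp only [Finset.mem_Ico] at hi ⊢; omega
      · intro j hj; rfl
    calc S2 ≤ ∑ j ∈ Finset.Ico (M+1) (n-M), (C * u n) * (a j + B * u (n-j)) := h1
      _ = (C * u n) * ((∑ j ∈ Finset.Ico (M+1) (n-M), a j)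
            + B * ∑ j ∈ Finset.Ico (M+1) (n-M), u (n-j)) := by
          rw [← Finset.mul_sum, Finset.sum_add_distrib, ← Finset.mul_sum]
      _ ≤ (C * u n) * (tailA M + B * tailU M) := by
          rw [hrefl]
          refine mul_le_mul_of_nonneg_left ?_ (mul_pos hC hun).le
          have := htailAle M (n-M)
          have := htailUle M (n-M)
          nlinarith [htailUle M (n-M), htailAle M (n-M)]
  -- put together
  have hdecomp : conv a u n / u n = g n + S2 / u n := by
    rw [hsplit, hS3, hg_def, hS2_def, add_div, add_div, Finset.sum_div, Finset.sum_div,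
      Finset.sum_div]
    simp only [mul_div_assoc]
    ring
  rw [Real.dist_eq, hdecomp]
  have hgclose := hN₂ n hnN₂
  rw [Real.dist_eq] at hgclose
  have hS2small : |S2 / u n| < η := by
    rw [abs_of_nonneg (div_nonneg hS2nn hun.le)]
    rw [div_lt_iff₀ hun]
    calc S2 ≤ C * u n * (tailA M + B * tailU M) := hS2le
      _ = (C * (tailA M + B * tailU M)) * u n := by ring
      _ < η * u n := by
          exact mul_lt_mul_of_pos_right hMtail hun
  calc |g n + S2/u n - L| = |(g n - LM) + S2/u n + (LM - L)| := by
        congr 1; ring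
    _ ≤ |g n - LM| + |S2/u n| + |LM - L| := by
        refine le_trans (abs_add_le _ _) ?_
        have := abs_add_le (g n - LM) (S2/u n)
        linarith
    _ < η + η + η := by linarith
    _ < ε := by rw [hη_def]; linarith
end Main

lemma conv_eq_range (a b : ℕ → ℝ) (ha0 : a 0 = 0) (hb0 : b 0 = 0) (n : ℕ) :
    conv a b n = ∑ k ∈ Finset.range (n+1), a k * b (n-k) := by
  rcases Nat.eq_zero_or_pos n with h | h
  · subst h; simp [conv, ha0]
  · rw [Finset.sum_range_succ, Nat.sub_self, hb0, mul_zero, add_zero]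
    rw [Finset.range_eq_Ico, Finset.sum_eq_sum_Ico_succ_bot h, ha0, zero_mul, zero_add]
    rfl

lemma conv_summable (a b : ℕ → ℝ) (ha0 : a 0 = 0) (hb0 : b 0 = 0)
    (hann : ∀ n, 0 ≤ a n) (hbnn : ∀ n, 0 ≤ b n)
    (hasum : Summable a) (hbsum : Summable b) :
    Summable (conv a b) ∧ (∑' n, conv a b n) = (∑' n, a n) * (∑' n, b n) := by
  have hfa : Summable fun x => ‖a x‖ :=
    hasum.congr fun x => by rw [Real.norm_eq_abs, abs_of_nonneg (hann x)]
  have hfb : Summable fun x => ‖b x‖ :=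
    hbsum.congr fun x => by rw [Real.norm_eq_abs, abs_of_nonneg (hbnn x)]
  have h1 : Summable fun n => ∑ k ∈ Finset.range (n+1), a k * b (n-k) :=
    (summable_norm_sum_mul_range_of_summable_norm hfa hfb).of_norm
  have h2 : Summable (conv a b) :=
    h1.congr fun n => (conv_eq_range a b ha0 hb0 n).symm
  refine ⟨h2, ?_⟩
  have h3 := tsum_mul_tsum_eq_tsum_sum_range_of_summable_norm hfa hfb
  rw [h3]
  exact tsum_congr fun n => conv_eq_range a b ha0 hb0 n


/-- if `(u_n)` is positive, regularly varying with index `-γ`,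
`γ > 1`, and `u := ∑_{n≥1} u_n < 1`, then `u_n^{*(k)} / u_n → k u^{k-1}` for
each fixed `k ≥ 1`. -/
theorem stmt5 (u : ℕ → ℝ) (hu0 : u 0 = 0) (hupos : ∀ n, 1 ≤ n → 0 < u n)
    (γ : ℝ) (hγ : 1 < γ) (hrv : RegVar u (-γ))
    (husum : Summable u) (hult : (∑' n, u n) < 1) :
    ∀ k : ℕ, 1 ≤ k →
      Filter.Tendsto (fun n => iterConv u k n / u n) Filter.atTop
        (nhds (k * (∑' n, u n) ^ (k - 1))) := by

  have hγ0 : 0 < γ := lt_trans one_pos hγ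
  have hunn : ∀ n, 0 ≤ u n := by
    intro n; rcases Nat.eq_zero_or_pos n with h|h
    · subst h; rw [hu0]
    · exact le_of_lt (hupos n h)
  set U : ℝ := ∑' n, u n with hU_def
  suffices H : ∀ k : ℕ, 1 ≤ k → (iterConv u k 0 = 0 ∧ (∀ n, 0 ≤ iterConv u k n) ∧
      Summable (iterConv u k) ∧ (∑' n, iterConv u k n) = U^k ∧
      Tendsto (fun n => iterConv u k n / u n) atTop (nhds ((k:ℝ) * U^(k-1)))) by
    intro k hk; exact (H k hk).2.2.2.2
  intro k hk
  induction k, hk using Nat.le_induction with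
  | base =>
    have h1 : ∀ n, iterConv u 1 n = u n := fun n => by simp [iterConv]
    refine ⟨by rw [h1, hu0], fun n => by rw [h1]; exact hunn n,
      husum.congr (fun n => (h1 n).symm), ?_, ?_⟩
    · rw [pow_one]; exact tsum_congr fun n => h1 n
    · have h2 : Tendsto (fun n => u n / u n) atTop (nhds 1) := by
        refine Tendsto.congr' ?_ tendsto_const_nhds
        filter_upwards [eventually_ge_atTop 1] with n hn
        rw [div_self (ne_of_gt (hupos n hn))]
      have h3 : ((1:ℕ):ℝ) * U^(1-1) = 1 := by norm_num
      rw [h3]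
      exact h2.congr fun n => by rw [h1]
  | succ k hk IH =>
    obtain ⟨ih0, ihnn, ihsum, ihtsum, ihlim⟩ := IH
    have heq : ∀ n, iterConv u (k+1) n = conv (iterConv u k) u n := by
      intro n
      have : iterConv u (k+1) n = if k = 0 then u n else conv (iterConv u k) u n := rfl
      rw [this, if_neg (by omega)]
    obtain ⟨hsum', htsum'⟩ := conv_summable (iterConv u k) u ih0 hu0 ihnn hunn ihsum husum
    have hlim := conv_tendsto hu0 hupos hγ0 hrv husum (iterConv u k) ih0 ihnn ihsum ihlim
    have hval : (∑' n, iterConv u k n) + ((k:ℝ) * U^(k-1)) * U = ((k+1:ℕ):ℝ) * U^((k+1)-1) := by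
      rw [ihtsum]
      have h4 : U^(k-1) * U = U^k := by
        rw [← pow_succ, Nat.sub_add_cancel hk]
      have h5 : ((k:ℝ) * U^(k-1)) * U = (k:ℝ) * U^k := by
        rw [mul_assoc, h4]
      rw [h5]
      have h6 : k + 1 - 1 = k := rfl
      rw [h6]
      push_cast
      ring
    refine ⟨by simp [heq, conv], fun n => by
        rw [heq]; exact Finset.sum_nonneg fun j _ => mul_nonneg (ihnn j) (hunn _),
      hsum'.congr (fun n => (heq n).symm), ?_, ?_⟩
    · rw [pow_succ, ← ihtsum, ← htsum']
      exact tsum_congr fun n => heq n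
    · rw [← hval]
      exact hlim.congr fun n => by rw [heq]
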